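/- Suppose C_a is a quaternary additive code of length n (an additive subgroup of F_4^n) that contains two F_2-subcodes C_{s1} and C_{s2} with C_{s1} ∩ C_{s2} = {0} and C_a = C_{s1} + C_{s2}, where every nonzero codeword of C_{s1} has weight ≥ d_2 and every nonzero codeword of C_{s2} + (C_{s1} arbitrary) has weight ≥ d_1, and let C_{au} ⊆ F_4^l be an additive code, F_2-isomorphic to C_{s2} via an isomorphism φ, all of whose nonzero codewords have weight ≥ δ. Then the set {(c_1 + c_2, φ(c_2)) : c_1 ∈ C_{s1}, c_2 ∈ C_{s2}} ⊆ F_4^{n+l} is an additive code of length n+l, with |C_{s1}|·|C_{s2}| elements, whose minimum nonzero weight is at least min{δ + d_1, d_2}. -/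

import Mathlib

/-- Hamming weight of a vector. -/
def wt {ι F : Type*} [Fintype ι] [Zero F] [DecidableEq F] (v : ι → F) : ℕ :=
  (Finset.univ.filter fun i => v i ≠ 0).card

/-- Additive Construction X: combining two disjoint F_2-subcodes of an additive code
with an auxiliary additive code of length l. -/
theorem stmt8 (n l d1 d2 δ : ℕ)
    (F : Type*) [Field F] [Fintype F] [DecidableEq F] (hF : Fintype.card F = 4)
    (Cs1 Cs2 : AddSubgroup (Fin n → F))
    (hdisj : Cs1 ⊓ Cs2 = ⊥)
    (hd2 : ∀ c ∈ Cs1, c ≠ 0 → d2 ≤ wt c)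
    (hd1 : ∀ c1 ∈ Cs1, ∀ c2 : Cs2, (c2 : Fin n → F) ≠ 0 → d1 ≤ wt (c1 + (c2 : Fin n → F)))
    (φ : Cs2 →+ (Fin l → F))
    (hinj : Function.Injective φ)
    (hδ : ∀ c2 : Cs2, (c2 : Fin n → F) ≠ 0 → δ ≤ wt (φ c2))
    (S : Set ((Fin n → F) × (Fin l → F)))
    (hS : S = {x | ∃ c1 ∈ Cs1, ∃ c2 : Cs2, x = (c1 + (c2 : Fin n → F), φ c2)}) :
    (0 ∈ S ∧ ∀ x ∈ S, ∀ y ∈ S, x + y ∈ S) ∧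
    Nat.card S = Nat.card Cs1 * Nat.card Cs2 ∧
    (∀ x ∈ S, x ≠ 0 → min (δ + d1) d2 ≤ wt x.1 + wt x.2) := by
  subst hS
  refine ⟨⟨⟨0, Cs1.zero_mem, 0, by simp; rfl⟩, ?_⟩, ?_, ?_⟩
  · rintro x ⟨c1, h1, c2, rfl⟩ y ⟨c1', h1', c2', rfl⟩
    refine ⟨c1 + c1', Cs1.add_mem h1 h1', c2 + c2', ?_⟩
    simp [Prod.ext_iff]
    abel
  · -- cardinality
    set f : Cs1 × Cs2 → (Fin n → F) × (Fin l → F) :=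
      fun p => ((p.1 : Fin n → F) + (p.2 : Fin n → F), φ p.2) with hf
    have hfin : Function.Injective f := by
      rintro ⟨c1, c2⟩ ⟨c1', c2'⟩ h
      simp only [hf, Prod.ext_iff] at h
      have h2 : c2 = c2' := hinj h.2
      subst h2
      have : (c1 : Fin n → F) = c1' := by
        have := h.1
        exact add_right_cancel this
      exact Prod.ext (Subtype.ext this) rfl
    have hrange : {x | ∃ c1 ∈ Cs1, ∃ c2 : Cs2, x = (c1 + (c2 : Fin n → F), φ c2)}
        = Set.range f := by
      ext x
      constructor
      · rintro ⟨c1, h1, c2, rfl⟩; exact ⟨(⟨c1, h1⟩, c2), rfl⟩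
      · rintro ⟨⟨c1, c2⟩, rfl⟩; exact ⟨c1, c1.2, c2, rfl⟩
    rw [hrange, Nat.card_range_of_injective hfin, Nat.card_prod]
  · rintro x ⟨c1, h1, c2, rfl⟩ hx
    by_cases hc2 : (c2 : Fin n → F) = 0
    · have hz : c2 = 0 := Subtype.ext hc2
      subst hz
      have hc1 : c1 ≠ 0 := by
        intro h; apply hx; simp [h]
      calc min (δ + d1) d2 ≤ d2 := min_le_right _ _
        _ ≤ wt c1 := hd2 c1 h1 hc1
        _ ≤ wt (c1 + ((0 : Cs2) : Fin n → F)) + wt (φ (0 : Cs2)) := by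
            simp
        _ = _ := rfl
    · have h1w : d1 ≤ wt (c1 + (c2 : Fin n → F)) := hd1 c1 h1 c2 hc2
      have h2w : δ ≤ wt (φ c2) := hδ c2 hc2
      calc min (δ + d1) d2 ≤ δ + d1 := min_le_left _ _
        _ ≤ wt (φ c2) + wt (c1 + (c2 : Fin n → F)) := Nat.add_le_add h2w h1w
        _ = _ := Nat.add_comm _ _
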